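/- Roth's theorem: For matrices A (m×m), B (n×n), C (m×n) over a field, the equation AX − XB = C has a solution X if and only if the block matrices [[A, C],[0, B]] and [[A, 0],[0, B]] are similar. -/

import Mathlib

open Matrix Module

namespace RothAux

variable {F : Type*} [Field F] {m n : ℕ}

/-- The linear map `Z ↦ M * Z - Z * B`. -/
def rothL (M : Matrix (Fin m ⊕ Fin n) (Fin m ⊕ Fin n) F)
    (B : Matrix (Fin n) (Fin n) F) :
    Matrix (Fin m ⊕ Fin n) (Fin n) F →ₗ[F] Matrix (Fin m ⊕ Fin n) (Fin n) F where
  toFun Z := M * Z - Z * B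
  map_add' _ _ := by simp [Matrix.mul_add, Matrix.add_mul]; abel
  map_smul' _ _ := by simp [Matrix.mul_smul, Matrix.smul_mul, smul_sub]

/-- bottom-block projection -/
def botL : Matrix (Fin m ⊕ Fin n) (Fin n) F →ₗ[F] Matrix (Fin n) (Fin n) F where
  toFun Z := Z.toRows₂
  map_add' _ _ := rfl
  map_smul' _ _ := rfl

/-- commutator with B -/
def commL (B : Matrix (Fin n) (Fin n) F) :
    Matrix (Fin n) (Fin n) F →ₗ[F] Matrix (Fin n) (Fin n) F where
  toFun Y := B * Y - Y * B
  map_add' _ _ := by simp [Matrix.mul_add, Matrix.add_mul]; abel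
  map_smul' _ _ := by simp [Matrix.mul_smul, Matrix.smul_mul, smul_sub]

lemma mem_ker_rothL (A : Matrix (Fin m) (Fin m) F) (B : Matrix (Fin n) (Fin n) F)
    (C : Matrix (Fin m) (Fin n) F) (Z : Matrix (Fin m ⊕ Fin n) (Fin n) F) :
    Z ∈ LinearMap.ker (rothL (fromBlocks A C 0 B) B) ↔
      A * Z.toRows₁ + C * Z.toRows₂ = Z.toRows₁ * B ∧ B * Z.toRows₂ = Z.toRows₂ * B := by
  rw [LinearMap.mem_ker]
  show fromBlocks A C 0 B * Z - Z * B = 0 ↔ _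
  rw [sub_eq_zero]
  conv_lhs => rw [← fromRows_toRows Z]
  rw [fromBlocks_mul_fromRows, fromRows_mul, fromRows_ext_iff]
  simp

/-- rank-nullity for a restricted map -/
lemma rank_nullity {V W : Type*} [AddCommGroup V] [Module F V] [AddCommGroup W] [Module F W]
    [FiniteDimensional F V] (f : V →ₗ[F] W) (K : Submodule F V) :
    finrank F (K.map f) + finrank F (K ⊓ LinearMap.ker f : Submodule F V) = finrank F K := by
  have h := LinearMap.finrank_range_add_finrank_ker (f.domRestrict K)
  rw [LinearMap.range_domRestrict] at h
  have hk : LinearMap.ker (f.domRestrict K)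
      = (K ⊓ LinearMap.ker f : Submodule F V).comap K.subtype := by
    ext x; simp [LinearMap.mem_ker]
  rw [hk, (Submodule.comapSubtypeEquivOfLe
    (inf_le_left : K ⊓ LinearMap.ker f ≤ K)).finrank_eq] at h
  exact h

end RothAux

open RothAux

theorem roth_theorem (F : Type*) [Field F] (m n : ℕ)
    (A : Matrix (Fin m) (Fin m) F) (B : Matrix (Fin n) (Fin n) F)
    (C : Matrix (Fin m) (Fin n) F) :
    (∃ X : Matrix (Fin m) (Fin n) F, A * X - X * B = C) ↔
      ∃ S : Matrix (Fin m ⊕ Fin n) (Fin m ⊕ Fin n) F, IsUnit S ∧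
        S⁻¹ * Matrix.fromBlocks A C 0 B * S = Matrix.fromBlocks A 0 0 B := by
  constructor
  · rintro ⟨X, hX⟩
    refine ⟨fromBlocks 1 (-X) 0 1, ?_, ?_⟩
    · have h1 : (fromBlocks 1 (-X) 0 1 : Matrix (Fin m ⊕ Fin n) (Fin m ⊕ Fin n) F)
          * fromBlocks 1 X 0 1 = 1 := by
        rw [fromBlocks_multiply]
        simp [fromBlocks_one]
      exact ⟨⟨_, _, h1, mul_eq_one_comm.mp h1⟩, rfl⟩
    · have hinv : (fromBlocks 1 (-X) 0 1 : Matrix (Fin m ⊕ Fin n) (Fin m ⊕ Fin n) F)⁻¹ =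
          fromBlocks 1 X 0 1 := by
        apply Matrix.inv_eq_right_inv
        rw [fromBlocks_multiply]
        simp [fromBlocks_one]
      rw [hinv, fromBlocks_multiply, fromBlocks_multiply, fromBlocks_inj]
      refine ⟨by simp, ?_, by simp, by simp⟩
      simp only [Matrix.one_mul, Matrix.mul_one, Matrix.zero_mul, Matrix.mul_zero,
        Matrix.mul_neg, add_zero, zero_add]
      rw [← hX]; abel
  · rintro ⟨S, hS, hsim⟩
    -- Notation
    set MC := fromBlocks A C 0 B with hMC
    set M0 := (fromBlocks A 0 0 B : Matrix (Fin m ⊕ Fin n) (Fin m ⊕ Fin n) F) with hM0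
    set KC := LinearMap.ker (rothL MC B) with hKC
    set K0 := LinearMap.ker (rothL M0 B) with hK0
    have hdet : IsUnit S.det := (Matrix.isUnit_iff_isUnit_det S).mp hS
    have hSinvS : S⁻¹ * S = 1 := Matrix.nonsing_inv_mul S hdet
    have hSSinv : S * S⁻¹ = 1 := Matrix.mul_nonsing_inv S hdet
    -- the equiv Z ↦ S⁻¹ * Z
    let e : Matrix (Fin m ⊕ Fin n) (Fin n) F ≃ₗ[F] Matrix (Fin m ⊕ Fin n) (Fin n) F :=
    { toFun := fun Z => S⁻¹ * Z
      invFun := fun Z => S * Z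
      map_add' := fun _ _ => Matrix.mul_add _ _ _
      map_smul' := fun _ _ => Matrix.mul_smul _ _ _
      left_inv := fun Z => by
        show S * (S⁻¹ * Z) = Z
        rw [← Matrix.mul_assoc, hSSinv, Matrix.one_mul]
      right_inv := fun Z => by
        show S⁻¹ * (S * Z) = Z
        rw [← Matrix.mul_assoc, hSinvS, Matrix.one_mul] }
    have hM0Sinv : M0 * S⁻¹ = S⁻¹ * MC := by
      rw [← hsim]
      rw [Matrix.mul_assoc, Matrix.mul_assoc, hSSinv, Matrix.mul_one]
    have hmap : KC.map (e : Matrix (Fin m ⊕ Fin n) (Fin n) F →ₗ[F] _) = K0 := by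
      ext Z
      constructor
      · rintro ⟨W, hW, rfl⟩
        simp only [hKC, hK0, LinearMap.mem_ker] at hW ⊢
        show rothL M0 B (S⁻¹ * W) = 0
        have : rothL M0 B (S⁻¹ * W) = S⁻¹ * rothL MC B W := by
          show M0 * (S⁻¹ * W) - S⁻¹ * W * B = S⁻¹ * (MC * W - W * B)
          rw [Matrix.mul_sub, ← Matrix.mul_assoc, hM0Sinv, Matrix.mul_assoc, Matrix.mul_assoc]
        rw [this, hW, Matrix.mul_zero]
      · intro hZ
        refine ⟨S * Z, ?_, ?_⟩
        · simp only [hKC, hK0, LinearMap.mem_ker] at hZ ⊢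
          show rothL MC B (S * Z) = 0
          have : rothL MC B (S * Z) = S * rothL M0 B Z := by
            show MC * (S * Z) - S * Z * B = S * (M0 * Z - Z * B)
            have hMCS : MC * S = S * M0 := by
              rw [← hsim, ← Matrix.mul_assoc, ← Matrix.mul_assoc, hSSinv, Matrix.one_mul]
            rw [Matrix.mul_sub, ← Matrix.mul_assoc, hMCS, Matrix.mul_assoc, Matrix.mul_assoc]
          rw [this, hZ, Matrix.mul_zero]
        · show S⁻¹ * (S * Z) = Z
          rw [← Matrix.mul_assoc, hSinvS, Matrix.one_mul]
    have hfr : finrank F KC = finrank F K0 := by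
      rw [← hmap]; exact (LinearEquiv.finrank_map_eq e KC).symm
    -- kernels of the projection agree
    have hker_eq : KC ⊓ LinearMap.ker (botL (F := F) (m := m) (n := n))
        = K0 ⊓ LinearMap.ker botL := by
      ext Z
      simp only [Submodule.mem_inf]
      constructor
      · rintro ⟨h1, h3⟩
        have h3' : Z.toRows₂ = 0 := h3
        obtain ⟨ha, hb⟩ := (mem_ker_rothL A B C Z).mp h1
        rw [h3'] at ha
        refine ⟨(mem_ker_rothL A B 0 Z).mpr ⟨?_, ?_⟩, h3⟩
        · rw [h3']; simpa using ha
        · rw [h3']; simp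
      · rintro ⟨h1, h3⟩
        have h3' : Z.toRows₂ = 0 := h3
        obtain ⟨ha, hb⟩ := (mem_ker_rothL A B 0 Z).mp h1
        rw [h3'] at ha
        refine ⟨(mem_ker_rothL A B C Z).mpr ⟨?_, ?_⟩, h3⟩
        · rw [h3']; simpa using ha
        · rw [h3']; simp
    -- images
    have himC : KC.map botL ≤ LinearMap.ker (commL B) := by
      rintro Y ⟨Z, hZ, rfl⟩
      obtain ⟨ha, hb⟩ := (mem_ker_rothL A B C Z).mp hZ
      show B * Z.toRows₂ - Z.toRows₂ * B = 0
      rw [hb, sub_self]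
    have him0 : K0.map botL = LinearMap.ker (commL B) := by
      apply le_antisymm
      · rintro Y ⟨Z, hZ, rfl⟩
        obtain ⟨ha, hb⟩ := (mem_ker_rothL A B 0 Z).mp hZ
        show B * Z.toRows₂ - Z.toRows₂ * B = 0
        rw [hb, sub_self]
      · intro Y hY
        have h2 : B * Y - Y * B = 0 := hY
        have hY' : B * Y = Y * B := sub_eq_zero.mp h2
        refine ⟨fromRows (0 : Matrix (Fin m) (Fin n) F) Y, ?_, ?_⟩
        · exact (mem_ker_rothL A B 0 (fromRows (0 : Matrix (Fin m) (Fin n) F) Y)).mpr (by simp [hY'])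
        · show (fromRows (0 : Matrix (Fin m) (Fin n) F) Y).toRows₂ = Y
          simp
    -- rank count
    have rc := rank_nullity (botL (F := F) (m := m) (n := n)) KC
    have r0 := rank_nullity (botL (F := F) (m := m) (n := n)) K0
    rw [hker_eq] at rc
    rw [him0] at r0
    rw [hfr] at rc
    have hrank : finrank F (KC.map botL) = finrank F (LinearMap.ker (commL B)) := by
      omega
    have heq : KC.map botL = LinearMap.ker (commL B) :=
      Submodule.eq_of_le_of_finrank_le himC (le_of_eq hrank.symm)
    have hmem : (-1 : Matrix (Fin n) (Fin n) F) ∈ KC.map botL := by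
      rw [heq, LinearMap.mem_ker]
      show B * (-1) - (-1) * B = 0
      simp
    obtain ⟨Z, hZ, hZ2⟩ := hmem
    replace hZ := (mem_ker_rothL A B C Z).mp hZ
    have hZ2' : Z.toRows₂ = -1 := hZ2
    refine ⟨Z.toRows₁, ?_⟩
    have h1 := hZ.1
    rw [hZ2'] at h1
    simp only [Matrix.mul_neg, Matrix.mul_one] at h1
    -- h1 : A * Z.toRows₁ + -C = Z.toRows₁ * B
    rw [sub_eq_iff_eq_add]
    rw [← h1]; abel
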